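/- The value SCI_n(Γ)(v) = ⟨[v], w_Γ⟩ is independent of the choice of the marked base point on the curve Γ: if w and w′ are two signed words obtained from the same generic curve by different choices of base point, then w ∼ w′ (they are cyclically equivalent via iterated ν-shifts), and hence ⟨[v], w⟩ = ⟨[v], w′⟩ for every signed word v. -/

import Mathlib

/-- The bar involution on the alphabet 𝒜 = {X_j, X̄_j : j ∈ ℕ}: a letter is a pair
(index, sign) where sign `true` means X_j and `false` means X̄_j. -/
def bar (a : ℕ × Bool) : ℕ × Bool := (a.1, !a.2)

/-- A signed word: each letter occurring in it occurs exactly twice, and a letter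
never occurs together with its barred partner. -/
def IsSignedWord (w : List (ℕ × Bool)) : Prop :=
  (∀ a ∈ w, w.count a = 2) ∧ ∀ a ∈ w, bar a ∉ w

/-- Isomorphism of signed words: a bijection of the alphabet carrying one word to the
other and preserving the signs of the letters occurring in the word. -/
def SWIso (w w' : List (ℕ × Bool)) : Prop :=
  ∃ f : ℕ × Bool → ℕ × Bool, Function.Bijective f ∧ w' = w.map f ∧
    ∀ a ∈ w, (f a).2 = a.2

/-- The ν-shift: ν(A x A y) = x Ā y Ā. -/
def nuShift : List (ℕ × Bool) → List (ℕ × Bool)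
  | [] => []
  | a :: rest => (rest.map fun b => if b = a then bar a else b) ++ [bar a]

open scoped Classical in
/-- ⟨u, w⟩ : the number of subwords of w (sublists obtained by deleting both
occurrences of each deleted letter) isomorphic to u. -/
noncomputable def pairing (u w : List (ℕ × Bool)) : ℕ :=
  (w.sublists.filter fun v => decide (SWIso u v)).length

/-- The set of representatives of the cyclic equivalence class of v
(the orbit of v under the ν-shift). -/
def cyclicClass (v : List (ℕ × Bool)) : Finset (List (ℕ × Bool)) :=
  (Finset.range (v.length + 1)).image fun l => nuShift^[l] v

/-- ⟨[v], w⟩ : the pairing of the class sum [v] with w. -/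
noncomputable def bracketPairing (v w : List (ℕ × Bool)) : ℕ :=
  ∑ u ∈ cyclicClass v, pairing u w

namespace BP
open List

abbrev Letter := ℕ × Bool

lemma bar_bar (a : Letter) : bar (bar a) = a := by simp [bar]

lemma bar_ne (a : Letter) : bar a ≠ a := by
  simp only [bar, ne_eq, Prod.ext_iff]
  intro h
  exact (Bool.not_ne_self a.2) h.2

lemma bar_inj : Function.Injective bar := by
  intro a b h
  rw [← bar_bar a, h, bar_bar]

def NoBars (w : List Letter) : Prop := ∀ a ∈ w, bar a ∉ w

/-- the swap of `c` and `bar c` -/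
def e (c : Letter) : Letter → Letter :=
  fun b => if b = c then bar c else if b = bar c then c else b

lemma e_self (c : Letter) : e c c = bar c := by simp [e]

lemma e_barself (c : Letter) : e c (bar c) = c := by simp [e, bar_ne]

lemma e_of_ne {c b : Letter} (h1 : b ≠ c) (h2 : b ≠ bar c) : e c b = b := by
  simp [e, h1, h2]

lemma e_invol (c : Letter) : Function.Involutive (e c) := by
  intro b
  by_cases h1 : b = c
  · subst h1; rw [e_self, e_barself]
  · by_cases h2 : b = bar c
    · subst h2; rw [e_barself, e_self]
    · rw [e_of_ne h1 h2, e_of_ne h1 h2]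

lemma e_bij (c : Letter) : Function.Bijective (e c) := (e_invol c).bijective

lemma e_inj (c : Letter) : Function.Injective (e c) := (e_bij c).injective

lemma e_bar_comm (c b : Letter) : e c (bar b) = bar (e c b) := by
  by_cases h1 : b = c
  · subst h1; rw [e_barself, e_self, bar_bar]
  · by_cases h2 : b = bar c
    · subst h2; rw [bar_bar, e_self, e_barself]
    · have h3 : bar b ≠ c := fun h => h2 (by rw [← h, bar_bar])
      have h4 : bar b ≠ bar c := fun h => h1 (bar_inj h)
      rw [e_of_ne h3 h4, e_of_ne h1 h2]

lemma count_map_inj {f : Letter → Letter} (hf : Function.Injective f)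
    (l : List Letter) (b : Letter) : (l.map f).count (f b) = l.count b := by
  simp only [List.count, List.countP_map]
  apply List.countP_congr
  intro a _
  simp only [Function.comp_apply, beq_iff_eq, hf.eq_iff]

lemma perm_count {l₁ l₂ : List Letter} (h : l₁.Perm l₂) (a : Letter) :
    l₁.count a = l₂.count a := h.countP_eq _

lemma nuShift_cons_def (a : Letter) (l : List Letter) :
    nuShift (a :: l) = (l.map fun b => if b = a then bar a else b) ++ [bar a] := rfl

lemma nuShift_cons {c : Letter} {t : List Letter} (h : bar c ∉ t) :
    nuShift (c :: t) = (t ++ [c]).map (e c) := by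
  rw [nuShift_cons_def, List.map_append]
  congr 1
  · apply List.map_congr_left
    intro b hb
    by_cases hbc : b = c
    · simp [hbc, e_self]
    · rw [e_of_ne hbc (fun hh => h (hh ▸ hb)), if_neg hbc]
  · simp [e_self]

lemma length_nuShift (s : List Letter) : (nuShift s).length = s.length := by
  cases s with
  | nil => rfl
  | cons a t => simp [nuShift_cons_def]

lemma count_nuShift_cons {c : Letter} {t : List Letter} (h : bar c ∉ t) (b : Letter) :
    (nuShift (c :: t)).count (e c b) = (c :: t).count b := by
  rw [nuShift_cons h, count_map_inj (e_inj c),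
    perm_count (List.perm_append_singleton c t)]

lemma mem_nuShift_cons {c : Letter} {t : List Letter} (h : bar c ∉ t) (d : Letter) :
    d ∈ nuShift (c :: t) ↔ e c d ∈ (c :: t) := by
  rw [nuShift_cons h, ← (List.perm_append_singleton c t).mem_iff]
  constructor
  · intro hd
    rcases List.mem_map.1 hd with ⟨b, hb, rfl⟩
    rwa [e_invol]
  · intro hd
    exact List.mem_map.2 ⟨e c d, hd, e_invol c d⟩

lemma bar_head_not_mem_tail {c : Letter} {t : List Letter} (h : NoBars (c :: t)) :
    bar c ∉ t :=
  fun hh => h c (mem_cons_self) (mem_cons_of_mem c hh)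

lemma signed_nuShift {s : List Letter} (hs : IsSignedWord s) : IsSignedWord (nuShift s) := by
  cases s with
  | nil => exact hs
  | cons c t =>
    have hbc : bar c ∉ t := bar_head_not_mem_tail hs.2
    constructor
    · intro d hd
      rw [mem_nuShift_cons hbc] at hd
      have h1 : d = e c (e c d) := (e_invol c d).symm
      rw [h1, count_nuShift_cons hbc]
      exact hs.1 _ hd
    · intro d hd hbd
      rw [mem_nuShift_cons hbc] at hd
      rw [mem_nuShift_cons hbc, e_bar_comm] at hbd
      exact hs.2 _ hd hbd

lemma noBars_nuShift {s : List Letter} (hs : NoBars s) : NoBars (nuShift s) := by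
  cases s with
  | nil => exact hs
  | cons c t =>
    have hbc : bar c ∉ t := bar_head_not_mem_tail hs
    intro d hd hbd
    rw [mem_nuShift_cons hbc] at hd
    rw [mem_nuShift_cons hbc, e_bar_comm] at hbd
    exact hs _ hd hbd

lemma noBars_of_sublist {s w : List Letter} (h : s.Sublist w) (hw : NoBars w) : NoBars s :=
  fun a ha hb => hw a (h.subset ha) (h.subset hb)

lemma signed_of_nuShift {s : List Letter} (hnb : NoBars s) (h : IsSignedWord (nuShift s)) :
    IsSignedWord s := by
  cases s with
  | nil => exact h
  | cons c t =>
    have hbc : bar c ∉ t := bar_head_not_mem_tail hnb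
    refine ⟨?_, hnb⟩
    intro d hd
    rw [← count_nuShift_cons hbc d]
    apply h.1
    rw [mem_nuShift_cons hbc, e_invol]
    exact hd

lemma swiso_length {u s : List Letter} (h : SWIso u s) : u.length = s.length := by
  obtain ⟨f, -, rfl, -⟩ := h; simp

lemma SWIso.refl (u : List Letter) : SWIso u u :=
  ⟨id, Function.bijective_id, (List.map_id u).symm, fun _ _ => rfl⟩

lemma count_of_SWIso {u s : List Letter} (h : SWIso u s) (hu : IsSignedWord u) :
    ∀ d ∈ s, s.count d = 2 := by
  obtain ⟨f, hf, rfl, -⟩ := h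
  intro d hd
  rcases List.mem_map.1 hd with ⟨b, hb, rfl⟩
  rw [count_map_inj hf.injective]
  exact hu.1 b hb

lemma signed_of_SWIso {u s : List Letter} (h : SWIso u s) (hu : IsSignedWord u)
    (hnb : NoBars s) : IsSignedWord s := ⟨count_of_SWIso h hu, hnb⟩

lemma swiso_nuShift {u s : List Letter} (h : SWIso u s) (hu : IsSignedWord u)
    (hs : IsSignedWord s) : SWIso (nuShift u) (nuShift s) := by
  obtain ⟨f, hf, rfl, hsign⟩ := h
  cases u with
  | nil => exact SWIso.refl _
  | cons b tu =>
    have hbu : b ∈ b :: tu := mem_cons_self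
    have hbbar : bar b ∉ tu := bar_head_not_mem_tail hu.2
    have hmap : (b :: tu).map f = f b :: tu.map f := rfl
    have hcmem : f b ∈ (b :: tu).map f := List.mem_map.2 ⟨b, hbu, rfl⟩
    have hcbarmem : bar (f b) ∉ (b :: tu).map f := hs.2 (f b) hcmem
    have hcbar : bar (f b) ∉ tu.map f := fun hh => hcbarmem (hmap ▸ mem_cons_of_mem _ hh)
    refine ⟨(e (f b)) ∘ f ∘ (e b), ((e_bij (f b)).comp hf).comp (e_bij b), ?_, ?_⟩
    · rw [hmap, nuShift_cons hbbar, nuShift_cons hcbar, List.map_map]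
      have h2 : ((e (f b) ∘ f ∘ e b) ∘ e b) = e (f b) ∘ f := by
        funext x; simp only [Function.comp_apply, e_invol b x]
      rw [h2, ← List.map_map]
      congr 1
      rw [List.map_append]
      rfl
    · intro d hd
      rw [mem_nuShift_cons hbbar] at hd
      by_cases hdb : d = bar b
      · subst hdb
        have h3 : e b (bar b) = b := e_barself b
        show (e (f b) (f (e b (bar b)))).2 = (bar b).2
        rw [h3, e_self]
        show (!(f b).2) = !b.2
        rw [hsign b hbu]
      · have ha1 : e b d ≠ b := fun hh => hdb (by rw [← e_invol b d, hh, e_self])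
        have ha2 : e b d ∈ tu ∨ e b d = b := by
          rcases mem_cons.1 hd with h | h
          · exact Or.inr h
          · exact Or.inl h
        have hamem : e b d ∈ b :: tu := hd
        have ha3 : e b d ≠ bar b := fun hh => hu.2 b hbu (hh ▸ hamem)
        have hda : d = e b d := by
          conv_lhs => rw [← e_invol b d]
          rw [e_of_ne ha1 ha3]
        have hdmem : d ∈ b :: tu := hda ▸ hamem
        have hdb' : d ≠ b := by rw [hda]; exact ha1
        have hfd1 : f d ≠ f b := fun hh => hdb' (hf.injective hh)
        have hfd2 : f d ≠ bar (f b) := by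
          intro hh
          exact hcbarmem (hh ▸ List.mem_map.2 ⟨d, hdmem, rfl⟩)
        show (e (f b) (f (e b d))).2 = d.2
        rw [← hda, e_of_ne hfd1 hfd2]
        exact hsign d hdmem

lemma swiso_nuShift_iter {u s : List Letter} (h : SWIso u s) (hu : IsSignedWord u)
    (hs : IsSignedWord s) : ∀ k, SWIso (nuShift^[k] u) (nuShift^[k] s) := by
  intro k
  induction k generalizing u s with
  | zero => exact h
  | succ k ih =>
    rw [Function.iterate_succ_apply, Function.iterate_succ_apply]
    exact ih (swiso_nuShift h hu hs) (signed_nuShift hu) (signed_nuShift hs)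

lemma signed_iterate {s : List Letter} (hs : IsSignedWord s) (k : ℕ) :
    IsSignedWord (nuShift^[k] s) := by
  induction k with
  | zero => exact hs
  | succ k ih => rw [Function.iterate_succ_apply']; exact signed_nuShift ih

lemma length_iterate (s : List Letter) (k : ℕ) : (nuShift^[k] s).length = s.length := by
  induction k with
  | zero => rfl
  | succ k ih => rw [Function.iterate_succ_apply', length_nuShift, ih]

/-- the flip applied after `k` shifts -/
def F (v : List Letter) (k : ℕ) (b : Letter) : Letter :=
  if (v.take k).count b % 2 = 1 then bar b else b

lemma F_fst (v : List Letter) (k : ℕ) (b : Letter) : (F v k b).1 = b.1 := by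
  unfold F; split <;> rfl

lemma nuShift_iterate_eq {v : List Letter} (hv : IsSignedWord v) :
    ∀ k, k ≤ v.length → nuShift^[k] v = (v.drop k ++ v.take k).map (F v k) := by
  intro k
  induction k with
  | zero =>
    intro _
    simp only [Function.iterate_zero, id_eq, List.drop_zero, List.take_zero, List.append_nil]
    have : ∀ b ∈ v, F v 0 b = id b := by
      intro b _
      unfold F
      simp
    rw [List.map_congr_left this, List.map_id]
  | succ k ih =>
    intro hk1
    have hk : k < v.length := hk1
    have hkle : k ≤ v.length := le_of_lt hk
    set c := v[k] with hc
    have hcv : c ∈ v := List.getElem_mem hk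
    have hdrop : v.drop k = c :: v.drop (k + 1) := List.drop_eq_getElem_cons hk
    have htake : v.take (k + 1) = v.take k ++ [c] := by
      rw [List.take_succ, List.getElem?_eq_getElem hk]
      rfl
    -- distinctness of F-values
    have hne : ∀ b ∈ v, b ≠ c → F v k b ≠ F v k c := by
      intro b hb hbc heq
      have h1 : b.1 = c.1 := by
        have := congrArg Prod.fst heq
        rwa [F_fst, F_fst] at this
      have h2 : b.2 ≠ c.2 := by
        intro h2'
        exact hbc (Prod.ext h1 h2')
      have h3 : b = bar c := by
        simp only [bar, Prod.ext_iff]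
        refine ⟨h1, ?_⟩
        cases hb2 : b.2 <;> cases hc2 : c.2
        · exact absurd (hb2.trans hc2.symm) h2
        · rfl
        · rfl
        · exact absurd (hb2.trans hc2.symm) h2
      exact hv.2 c hcv (h3 ▸ hb)
    -- parity step for c
    have hparc : bar (F v k c) = F v (k + 1) c := by
      have hcnt : (v.take (k + 1)).count c = (v.take k).count c + 1 := by
        rw [htake, List.count_append]
        simp
      unfold F
      rw [hcnt]
      by_cases hp : (v.take k).count c % 2 = 1
      · rw [if_pos hp, if_neg (by omega), bar_bar]
      · rw [if_neg hp, if_pos (by omega)]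
    -- counts unchanged for b ≠ c
    have hFsame : ∀ b : Letter, b ≠ c → F v (k + 1) b = F v k b := by
      intro b hbc
      unfold F
      rw [htake, List.count_append]
      have : List.count b [c] = 0 := by
        simp [List.count_cons, hbc, Ne.symm hbc]
      rw [this, Nat.add_zero]
    rw [Function.iterate_succ_apply', ih hkle, hdrop, List.cons_append, List.map_cons,
      nuShift_cons_def, htake, ← List.append_assoc]
    conv_rhs => rw [List.map_append]
    congr 1
    · rw [List.map_map]
      apply List.map_congr_left
      intro b hb
      have hbv : b ∈ v := by
        rcases List.mem_append.1 hb with h | h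
        · exact List.mem_of_mem_drop h
        · exact List.mem_of_mem_take h
      show (if F v k b = F v k c then bar (F v k c) else F v k b) = F v (k + 1) b
      by_cases hbc : b = c
      · subst hbc
        rw [if_pos rfl, hparc]
      · rw [if_neg (hne b hbv hbc), hFsame b hbc]
    · show [bar (F v k c)] = _
      simp only [List.map_cons, List.map_nil, hparc]

lemma nuShift_cycle {v : List Letter} (hv : IsSignedWord v) : nuShift^[v.length] v = v := by
  rw [nuShift_iterate_eq hv v.length le_rfl, List.drop_length, List.take_length,
    List.nil_append]
  have : ∀ b ∈ v, F v v.length b = id b := by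
    intro b hb
    unfold F
    rw [List.take_length, hv.1 b hb]
    simp
  rw [List.map_congr_left this, List.map_id]

lemma mem_cyclicClass {v u : List Letter} :
    u ∈ cyclicClass v ↔ ∃ l, l ≤ v.length ∧ nuShift^[l] v = u := by
  simp [cyclicClass, Finset.mem_image, Finset.mem_range, Nat.lt_succ_iff]

lemma signed_of_class {v u : List Letter} (hv : IsSignedWord v) (hu : u ∈ cyclicClass v) :
    IsSignedWord u := by
  obtain ⟨l, -, rfl⟩ := mem_cyclicClass.1 hu
  exact signed_iterate hv l

lemma length_of_class {v u : List Letter} (hu : u ∈ cyclicClass v) :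
    u.length = v.length := by
  obtain ⟨l, -, rfl⟩ := mem_cyclicClass.1 hu
  exact length_iterate v l

lemma nu_mem_class {v u : List Letter} (hv : IsSignedWord v) (hu : u ∈ cyclicClass v) :
    nuShift u ∈ cyclicClass v := by
  obtain ⟨l, hl, rfl⟩ := mem_cyclicClass.1 hu
  rcases lt_or_eq_of_le hl with h | h
  · exact mem_cyclicClass.2 ⟨l + 1, h, (Function.iterate_succ_apply' _ _ _)⟩
  · rw [h, nuShift_cycle hv]
    rcases Nat.eq_zero_or_pos v.length with h0 | h0
    · have : v = [] := List.length_eq_zero_iff.1 h0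
      subst this
      exact mem_cyclicClass.2 ⟨0, Nat.zero_le _, rfl⟩
    · exact mem_cyclicClass.2 ⟨1, h0, rfl⟩

lemma nu_surj_class {v u : List Letter} (hv : IsSignedWord v) (hu : u ∈ cyclicClass v) :
    ∃ u', ∃ _ : u' ∈ cyclicClass v, nuShift u' = u := by
  obtain ⟨l, hl, rfl⟩ := mem_cyclicClass.1 hu
  cases l with
  | zero =>
    rcases Nat.eq_zero_or_pos v.length with h0 | h0
    · have : v = [] := List.length_eq_zero_iff.1 h0
      subst this
      exact ⟨[], mem_cyclicClass.2 ⟨0, Nat.zero_le _, rfl⟩, rfl⟩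
    · refine ⟨nuShift^[v.length - 1] v,
        mem_cyclicClass.2 ⟨v.length - 1, Nat.sub_le _ _, rfl⟩, ?_⟩
      rw [← Function.iterate_succ_apply' nuShift (v.length - 1) v]
      simp only [Nat.succ_eq_add_one, Nat.sub_add_cancel h0]
      exact nuShift_cycle hv
  | succ m =>
    refine ⟨nuShift^[m] v, mem_cyclicClass.2 ⟨m, le_trans (Nat.le_succ m) hl, rfl⟩, ?_⟩
    exact (Function.iterate_succ_apply' nuShift m v).symm

lemma nu_inj_class {v u₁ u₂ : List Letter} (hv : IsSignedWord v)
    (h₁ : u₁ ∈ cyclicClass v) (h₂ : u₂ ∈ cyclicClass v)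
    (h : nuShift u₁ = nuShift u₂) : u₁ = u₂ := by
  have hs₁ : IsSignedWord u₁ := signed_of_class hv h₁
  have hs₂ : IsSignedWord u₂ := signed_of_class hv h₂
  have hl₁ : u₁.length = v.length := length_of_class h₁
  have hl₂ : u₂.length = v.length := length_of_class h₂
  rcases Nat.eq_zero_or_pos v.length with h0 | h0
  · rw [List.length_eq_zero_iff.1 (hl₁.trans h0), List.length_eq_zero_iff.1 (hl₂.trans h0)]
  · have key : ∀ u : List Letter, IsSignedWord u → u.length = v.length →
        nuShift^[v.length - 1] (nuShift u) = u := by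
      intro u hu hlu
      rw [← Function.iterate_succ_apply nuShift (v.length - 1) u]
      simp only [Nat.succ_eq_add_one, Nat.sub_add_cancel h0]
      rw [← hlu]
      exact nuShift_cycle hu
    rw [← key u₁ hs₁ hl₁, h, key u₂ hs₂ hl₂]

lemma iso_nu_iff {u s : List Letter} (hu : IsSignedWord u) (hnb : NoBars s)
    (hne : s ≠ []) : SWIso u s ↔ SWIso (nuShift u) (nuShift s) := by
  constructor
  · intro h
    exact swiso_nuShift h hu (signed_of_SWIso h hu hnb)
  · intro h
    have hnu : IsSignedWord (nuShift u) := signed_nuShift hu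
    have hnbs : NoBars (nuShift s) := noBars_nuShift hnb
    have hss : IsSignedWord (nuShift s) := signed_of_SWIso h hnu hnbs
    have hs : IsSignedWord s := signed_of_nuShift hnb hss
    have hlen : u.length = s.length := by
      have h2 := swiso_length h
      rwa [length_nuShift, length_nuShift] at h2
    have hpos : 0 < s.length := List.length_pos_iff.2 hne
    have h2 := swiso_nuShift_iter h hnu hss (s.length - 1)
    rw [← Function.iterate_succ_apply, ← Function.iterate_succ_apply] at h2
    simp only [Nat.succ_eq_add_one, Nat.sub_add_cancel hpos] at h2
    rw [← hlen] at h2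
    rw [nuShift_cycle hu] at h2
    rw [hlen, nuShift_cycle hs] at h2
    exact h2

open scoped Classical in
lemma pairing_eq_countP (u w : List Letter) :
    pairing u w = w.sublists.countP (fun s => decide (SWIso u s)) := by
  rw [pairing, List.countP_eq_length_filter]

open scoped Classical in
lemma core {v w : List Letter} (hv : IsSignedWord v) (hw : IsSignedWord w) :
    bracketPairing v w = bracketPairing v (nuShift w) := by
  cases w with
  | nil => rfl
  | cons a x =>
    have hax : a ∈ a :: x := mem_cons_self
    have hbar_ax : bar a ∉ a :: x := hw.2 a hax
    have hbx : bar a ∉ x := fun h => hbar_ax (mem_cons_of_mem _ h)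
    have hcount_x : x.count a = 1 := by
      have h2 := hw.1 a hax
      rw [List.count_cons_self] at h2
      omega
    set L := x.sublists' with hL
    have hP1 : ∀ u : List Letter, pairing u (a :: x) =
        L.countP (fun t => decide (SWIso u t)) +
        L.countP (fun t => decide (SWIso u (a :: t))) := by
      intro u
      rw [pairing_eq_countP, (List.sublists_perm_sublists' (a :: x)).countP_eq,
        List.sublists'_cons, List.countP_append, List.countP_map]
      rfl
    have hP2 : ∀ u : List Letter, pairing u (nuShift (a :: x)) =
        L.countP (fun t => decide (SWIso u (t.map fun b => if b = a then bar a else b))) +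
        L.countP (fun t => decide (SWIso u (nuShift (a :: t)))) := by
      intro u
      rw [pairing_eq_countP, nuShift_cons_def, List.sublists_concat, List.countP_append,
        List.sublists_map]
      simp only [List.countP_map]
      rw [(List.sublists_perm_sublists' x).countP_eq, (List.sublists_perm_sublists' x).countP_eq]
      rfl
    have claimA : ∀ u : List Letter, IsSignedWord u →
        L.countP (fun t => decide (SWIso u t)) =
        L.countP (fun t => decide (SWIso u (t.map fun b => if b = a then bar a else b))) := by
      intro u hu
      apply List.countP_congr
      intro t ht
      have htx : t <+ x := List.mem_sublists'.1 ht
      simp only [decide_eq_true_eq]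
      by_cases hat : a ∈ t
      · have hta : t.count a ≤ x.count a := htx.count_le a
        have h1 : ¬ SWIso u t := by
          intro hiso
          have h2 := count_of_SWIso hiso hu a hat
          omega
        have hmape : (t.map fun b => if b = a then bar a else b) = t.map (e a) := by
          apply List.map_congr_left
          intro b hb
          by_cases hba : b = a
          · simp [hba, e_self]
          · have hnb2 : b ≠ bar a := by
              intro hh
              exact hbx (hh ▸ htx.subset hb)
            rw [if_neg hba, e_of_ne hba hnb2]
        have h2 : ¬ SWIso u (t.map fun b => if b = a then bar a else b) := by
          rw [hmape]
          intro hiso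
          have hmem : e a a ∈ t.map (e a) := List.mem_map.2 ⟨a, hat, rfl⟩
          have h4 := count_of_SWIso hiso hu _ hmem
          rw [count_map_inj (e_inj a)] at h4
          omega
        exact iff_of_false h1 h2
      · have hmapid : (t.map fun b => if b = a then bar a else b) = t := by
          have h6 : ∀ b ∈ t, (if b = a then bar a else b) = id b := by
            intro b hb
            have hba : ¬ b = a := by
              intro hh
              rw [hh] at hb
              exact hat hb
            rw [if_neg hba]
            rfl
          rw [List.map_congr_left h6, List.map_id]
        rw [hmapid]
    have claimB : ∑ u ∈ cyclicClass v, L.countP (fun t => decide (SWIso u (a :: t))) =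
        ∑ u ∈ cyclicClass v, L.countP (fun t => decide (SWIso u (nuShift (a :: t)))) := by
      apply Finset.sum_bij (i := fun u _ => nuShift u)
      · intro u hu
        exact nu_mem_class hv hu
      · intro u₁ h₁ u₂ h₂ h
        exact nu_inj_class hv h₁ h₂ h
      · intro u hu
        exact nu_surj_class hv hu
      · intro u hu
        apply List.countP_congr
        intro t ht
        have htx : t <+ x := List.mem_sublists'.1 ht
        have hsub : a :: t <+ a :: x := htx.cons₂ a
        have hnb : NoBars (a :: t) := noBars_of_sublist hsub hw.2
        simp only [decide_eq_true_eq]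
        exact iso_nu_iff (signed_of_class hv hu) hnb (List.cons_ne_nil a t)
    calc bracketPairing v (a :: x)
        = ∑ u ∈ cyclicClass v, (L.countP (fun t => decide (SWIso u t)) +
            L.countP (fun t => decide (SWIso u (a :: t)))) :=
          Finset.sum_congr rfl (fun u _ => hP1 u)
      _ = (∑ u ∈ cyclicClass v, L.countP (fun t => decide (SWIso u t))) +
          (∑ u ∈ cyclicClass v, L.countP (fun t => decide (SWIso u (a :: t)))) :=
          Finset.sum_add_distrib
      _ = (∑ u ∈ cyclicClass v,
            L.countP (fun t => decide (SWIso u (t.map fun b => if b = a then bar a else b)))) +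
          (∑ u ∈ cyclicClass v, L.countP (fun t => decide (SWIso u (nuShift (a :: t))))) := by
          rw [Finset.sum_congr rfl (fun u hu => claimA u (signed_of_class hv hu)), claimB]
      _ = ∑ u ∈ cyclicClass v,
            (L.countP (fun t => decide (SWIso u (t.map fun b => if b = a then bar a else b))) +
             L.countP (fun t => decide (SWIso u (nuShift (a :: t))))) :=
          Finset.sum_add_distrib.symm
      _ = ∑ u ∈ cyclicClass v, pairing u (nuShift (a :: x)) :=
          (Finset.sum_congr rfl (fun u _ => (hP2 u).symm))
      _ = bracketPairing v (nuShift (a :: x)) := rfl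

end BP

/-- SCI_n(Γ)(v) = ⟨[v], w_Γ⟩ is independent of the choice of base point: if w and w′
are signed words of the same generic curve for different base points, then w′ is
obtained from w by iterated ν-shifts, and ⟨[v], w⟩ = ⟨[v], w′⟩ for every signed
word v.  In particular this holds when w′ = ν(w) (take l = 1). -/
theorem base_point_independence (n : ℕ) (v w w' : List (ℕ × Bool))
    (hv : IsSignedWord v)
    (hw : IsSignedWord w) (hlw : w.length = 2 * n)
    (hw' : IsSignedWord w')
    (hcyc : ∃ l : ℕ, nuShift^[l] w = w') :
    bracketPairing v w = bracketPairing v w' := by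
  obtain ⟨l, rfl⟩ := hcyc
  have aux : ∀ (k : ℕ) (u : List (ℕ × Bool)), IsSignedWord u →
      bracketPairing v u = bracketPairing v (nuShift^[k] u) := by
    intro k
    induction k with
    | zero => intro u _; rfl
    | succ k ih =>
      intro u hu
      rw [Function.iterate_succ_apply]
      exact (BP.core hv hu).trans (ih _ (BP.signed_nuShift hu))
  exact aux l w hw
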